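/- For every g ≥ 2, the point (1, 1, …, 1) ∈ (ℂ^×)^{3g−3} is a critical point of the genus-g necklace graph potential W_g, and W_g(1,…,1) = 8g − 8. -/

import Mathlib

open Finset

/-- `J⁺(x) = x + x⁻¹`. -/
noncomputable def Jp (x : ℂ) : ℂ := x + x⁻¹

/-- The genus-`g` necklace graph potential (one colored vertex) in the
coordinates `u i, v i, z i` for `i = 1, …, g-1`. -/
noncomputable def necklace (g : ℕ) (u v z : ℕ → ℂ) : ℂ :=
  z 1 * (Jp (v (g-1)) + Jp (u 1)) + (z 1)⁻¹ * (Jp (u (g-1)) + Jp (v 1)) +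
    ∑ i ∈ Finset.Icc 2 (g-1),
      (z i * (Jp (u (i-1)) + Jp (u i)) + (z i)⁻¹ * (Jp (v (i-1)) + Jp (v i)))

/-- A point of the torus is a critical point of the necklace graph potential
if all partial derivatives vanish there. -/
def IsCritNecklace (g : ℕ) (u v z : ℕ → ℂ) : Prop :=
  ∀ i ∈ Finset.Icc 1 (g-1),
    deriv (fun t => necklace g (Function.update u i t) v z) (u i) = 0 ∧
    deriv (fun t => necklace g u (Function.update v i t) z) (v i) = 0 ∧
    deriv (fun t => necklace g u v (Function.update z i t)) (z i) = 0

lemma hasDerivAt_Jp_one : HasDerivAt (fun t : ℂ => Jp t) 0 1 := by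
  have h := (hasDerivAt_id (1:ℂ)).fun_add (hasDerivAt_inv (one_ne_zero))
  have hv : (1:ℂ) + -((1:ℂ)^2)⁻¹ = 0 := by norm_num
  simpa [Jp, hv] using h

lemma keyz (c : ℂ) : HasDerivAt (fun t : ℂ => t * c + t⁻¹ * c) 0 1 := by
  have h := ((hasDerivAt_id (1:ℂ)).mul_const c).fun_add
    ((hasDerivAt_inv (one_ne_zero : (1:ℂ) ≠ 0)).mul_const c)
  have hv : (1:ℂ) * c + -((1:ℂ)^2)⁻¹ * c = 0 := by norm_num
  simpa [hv] using h

lemma hUJ (i : ℕ) : ∀ j, HasDerivAt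
    (fun t : ℂ => Jp (Function.update (fun _ => (1:ℂ)) i t j)) 0 1 := by
  intro j
  rcases eq_or_ne j i with rfl | h
  · simpa only [Function.update_self] using hasDerivAt_Jp_one
  · simp only [Function.update_of_ne h]
    exact hasDerivAt_const 1 _

lemma crit_u (g i : ℕ) : HasDerivAt
    (fun t => necklace g (Function.update (fun _ => (1:ℂ)) i t)
      (fun _ => 1) (fun _ => 1)) 0 1 := by
  have h := ((((hasDerivAt_const (1:ℂ) (Jp 1)).fun_add (hUJ i 1)).const_mul (1:ℂ)).fun_add
      (((hUJ i (g-1)).fun_add (hasDerivAt_const 1 (Jp 1))).const_mul ((1:ℂ)⁻¹))).fun_add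
    (HasDerivAt.fun_sum (u := Finset.Icc 2 (g-1)) (fun j _ => ((((hUJ i (j-1)).fun_add (hUJ i j)).const_mul (1:ℂ)).fun_add
      (hasDerivAt_const 1 ((1:ℂ)⁻¹ * (Jp 1 + Jp 1))))))
  simpa [necklace] using h

lemma crit_v (g i : ℕ) : HasDerivAt
    (fun t => necklace g (fun _ => 1) (Function.update (fun _ => (1:ℂ)) i t)
      (fun _ => 1)) 0 1 := by
  have h := ((((hUJ i (g-1)).fun_add (hasDerivAt_const 1 (Jp 1))).const_mul (1:ℂ)).fun_add
      (((hasDerivAt_const (1:ℂ) (Jp 1)).fun_add (hUJ i 1)).const_mul ((1:ℂ)⁻¹))).fun_add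
    (HasDerivAt.fun_sum (u := Finset.Icc 2 (g-1)) (fun j _ => ((hasDerivAt_const 1 ((1:ℂ) * (Jp 1 + Jp 1))).fun_add
      (((hUJ i (j-1)).fun_add (hUJ i j)).const_mul ((1:ℂ)⁻¹)))))
  simpa [necklace] using h

lemma crit_z (g i : ℕ) : HasDerivAt
    (fun t => necklace g (fun _ => 1) (fun _ => 1)
      (Function.update (fun _ => (1:ℂ)) i t)) 0 1 := by
  have hZ : ∀ j, HasDerivAt (fun t : ℂ =>
      Function.update (fun _ => (1:ℂ)) i t j * (Jp 1 + Jp 1) +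
      (Function.update (fun _ => (1:ℂ)) i t j)⁻¹ * (Jp 1 + Jp 1)) 0 1 := by
    intro j
    rcases eq_or_ne j i with rfl | h
    · simpa only [Function.update_self] using keyz (Jp 1 + Jp 1)
    · simp only [Function.update_of_ne h]
      exact hasDerivAt_const 1 _
  have h := (hZ 1).fun_add (HasDerivAt.fun_sum (u := Finset.Icc 2 (g-1)) (fun j _ => hZ j))
  simpa [necklace] using h

/-- The point `(1,…,1)` is a critical point of the genus-`g` necklace graph
potential, with value `8g - 8` (the conifold point). -/
theorem necklace_conifold_point (g : ℕ) (hg : 2 ≤ g) :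
    IsCritNecklace g (fun _ => 1) (fun _ => 1) (fun _ => 1) ∧
    necklace g (fun _ => 1) (fun _ => 1) (fun _ => 1) = 8*(g : ℂ) - 8 := by
  constructor
  · intro i _
    exact ⟨(crit_u g i).deriv, (crit_v g i).deriv, (crit_z g i).deriv⟩
  · have hcard : (Finset.Icc 2 (g-1)).card = g - 2 := by
      rw [Nat.card_Icc]; omega
    have hc : ((g - 2 : ℕ) : ℂ) = (g : ℂ) - 2 := by
      push_cast [Nat.cast_sub (by omega : 2 ≤ g)]; ring
    simp [necklace, Jp, Finset.sum_const, hcard, hc]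
    ring
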